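/- Let d ≥ 2 and let C ⊆ ℝ^d be a pointed, finitely generated convex cone of dimension d, with E its set of extremal rays. If x ∈ ℝ^d and x ∉ C, then there exists an extremal ray l ∈ E of C such that the translate (x + l) ∩ C is empty, i.e., x + t·v ∉ C for all t ≥ 0, where v is a generator of l. -/

import Mathlib

open Finset

open Matrix

/-- `F` is a face of the cone `C`: `F ⊆ C` and for all `a, b ∈ C`,
`a + b ∈ F` iff `a ∈ F` and `b ∈ F`. -/
def IsFaceOfCone {d : ℕ} (C F : Set (Fin d → ℝ)) : Prop :=
  F ⊆ C ∧ ∀ a ∈ C, ∀ b ∈ C, (a + b ∈ F ↔ a ∈ F ∧ b ∈ F)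

namespace ConeAux

variable {d : ℕ}

/-- The cone generated by a finite set of vectors. -/
def Cone (G : Finset (Fin d → ℝ)) : Set (Fin d → ℝ) :=
  {x | ∃ c : (Fin d → ℝ) → ℝ, (∀ g, 0 ≤ c g) ∧ x = ∑ g ∈ G, c g • g}

lemma zero_mem (G : Finset (Fin d → ℝ)) : (0 : Fin d → ℝ) ∈ Cone G :=
  ⟨0, fun _ => le_refl 0, by simp⟩

lemma gen_mem {G : Finset (Fin d → ℝ)} {g : Fin d → ℝ} (hg : g ∈ G) : g ∈ Cone G := by
  classical
  refine ⟨fun h => if h = g then 1 else 0, fun h => by positivity, ?_⟩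
  rw [Finset.sum_eq_single g]
  · simp
  · intro b _ hb; simp [hb]
  · intro h; exact absurd hg h

lemma add_mem {G : Finset (Fin d → ℝ)} {a b : Fin d → ℝ} (ha : a ∈ Cone G) (hb : b ∈ Cone G) :
    a + b ∈ Cone G := by
  obtain ⟨c1, h1, e1⟩ := ha
  obtain ⟨c2, h2, e2⟩ := hb
  exact ⟨c1 + c2, fun g => add_nonneg (h1 g) (h2 g), by
    simp [e1, e2, add_smul, Finset.sum_add_distrib]⟩

lemma smul_mem {G : Finset (Fin d → ℝ)} {a : Fin d → ℝ} {t : ℝ} (ht : 0 ≤ t)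
    (ha : a ∈ Cone G) : t • a ∈ Cone G := by
  obtain ⟨c, h, e⟩ := ha
  exact ⟨t • c, fun g => mul_nonneg ht (h g), by
    simp [e, Finset.smul_sum, smul_smul]⟩

lemma sum_mem {G : Finset (Fin d → ℝ)} {ι : Type*} (s : Finset ι) (f : ι → Fin d → ℝ)
    (h : ∀ i ∈ s, f i ∈ Cone G) : ∑ i ∈ s, f i ∈ Cone G := by
  classical
  induction s using Finset.induction with
  | empty => simpa using zero_mem G
  | insert _ _ hx ih =>
    rw [Finset.sum_insert hx]
    exact add_mem (h _ (Finset.mem_insert_self _ _))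
      (ih fun i hi => h i (Finset.mem_insert_of_mem hi))

lemma cone_mono {G G' : Finset (Fin d → ℝ)} (h : G ⊆ G') : Cone G ⊆ Cone G' := by
  classical
  rintro x ⟨c, hc, rfl⟩
  refine ⟨fun g => if g ∈ G then c g else 0, fun g => ?_, ?_⟩
  · dsimp only; split
    · exact hc g
    · exact le_refl 0
  rw [← Finset.sum_subset h]
  · exact Finset.sum_congr rfl fun g hg => by simp [hg]
  · intro g _ hg; simp [hg]

lemma dot_sum (φ : Fin d → ℝ) (G : Finset (Fin d → ℝ)) (c : (Fin d → ℝ) → ℝ) :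
    φ ⬝ᵥ (∑ g ∈ G, c g • g) = ∑ g ∈ G, c g * (φ ⬝ᵥ g) := by
  classical
  induction G using Finset.induction with
  | empty => simp
  | insert _ _ hx ih => simp [Finset.sum_insert hx, dotProduct_add, ih,
      dotProduct_smul, smul_eq_mul]

lemma dual_nonneg {G : Finset (Fin d → ℝ)} {φ : Fin d → ℝ} (h : ∀ g ∈ G, 0 ≤ φ ⬝ᵥ g)
    {y : Fin d → ℝ} (hy : y ∈ Cone G) : 0 ≤ φ ⬝ᵥ y := by
  obtain ⟨c, hc, rfl⟩ := hy
  rw [dot_sum]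
  exact Finset.sum_nonneg fun g hg => mul_nonneg (hc g) (h g hg)


lemma farkas_aux (n : ℕ) : ∀ G : Finset (Fin d → ℝ), G.card ≤ n → ∀ x ∉ Cone G,
    ∃ φ : Fin d → ℝ, (∀ g ∈ G, 0 ≤ φ ⬝ᵥ g) ∧ φ ⬝ᵥ x < 0 := by
  classical
  induction n with
  | zero =>
    intro G hG x hx
    have hGe : G = ∅ := Finset.card_eq_zero.1 (Nat.le_zero.1 hG)
    subst hGe
    have hx0 : x ≠ 0 := by
      intro h; exact hx ⟨0, fun _ => le_refl 0, by simp [h]⟩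
    refine ⟨-x, by simp, ?_⟩
    rw [neg_dotProduct, neg_lt_zero]
    have h2 : 0 ≤ x ⬝ᵥ x := Finset.sum_nonneg fun i _ => mul_self_nonneg _
    rcases h2.lt_or_eq with h3 | h3
    · exact h3
    · exact absurd (dotProduct_self_eq_zero.1 h3.symm) hx0
  | succ n ih =>
    intro G hG x hx
    by_cases hcard : G.card ≤ n
    · exact ih G hcard x hx
    have hGne : G.Nonempty := by
      rw [Finset.nonempty_iff_ne_empty]
      rintro rfl; simp at hcard
    obtain ⟨g0, hg0⟩ := hGne
    set G' := G.erase g0 with hG'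
    have hsub : G' ⊆ G := Finset.erase_subset _ _
    have hcard' : G'.card ≤ n := by
      have h1 : G'.card = G.card - 1 := Finset.card_erase_of_mem hg0
      have h2 : 0 < G.card := Finset.card_pos.2 ⟨g0, hg0⟩
      omega
    have hx' : x ∉ Cone G' := fun h => hx (cone_mono hsub h)
    obtain ⟨φ, hφ, hφx⟩ := ih G' hcard' x hx'
    by_cases hφg0 : 0 ≤ φ ⬝ᵥ g0
    · refine ⟨φ, fun g hg => ?_, hφx⟩
      rcases eq_or_ne g g0 with rfl | hne
      · exact hφg0
      · exact hφ g (Finset.mem_erase.2 ⟨hne, hg⟩)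
    push_neg at hφg0
    -- project along g0
    set p : (Fin d → ℝ) → (Fin d → ℝ) := fun y => y - ((φ ⬝ᵥ y) / (φ ⬝ᵥ g0)) • g0 with hp
    have hdotp : ∀ ψ y : Fin d → ℝ, ψ ⬝ᵥ (p y) = ψ ⬝ᵥ y - (φ ⬝ᵥ y) / (φ ⬝ᵥ g0) * (ψ ⬝ᵥ g0) := by
      intro ψ y
      simp [hp, dotProduct_sub, dotProduct_smul, smul_eq_mul]
    set G'' := G'.image p with hG''
    have hcard'' : G''.card ≤ n := le_trans (Finset.card_image_le) hcard'
    have hpg_mem : ∀ g ∈ G', p g ∈ Cone G := by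
      intro g hg
      have h1 : (0:ℝ) ≤ -(φ ⬝ᵥ g) / (φ ⬝ᵥ g0) := by
        rw [div_nonneg_iff]
        right
        exact ⟨neg_nonpos.2 (hφ g hg), le_of_lt hφg0⟩
      have : p g = g + (-(φ ⬝ᵥ g) / (φ ⬝ᵥ g0)) • g0 := by
        simp [hp, sub_eq_add_neg, neg_div, neg_smul]
      rw [this]
      exact add_mem (gen_mem (hsub hg)) (smul_mem h1 (gen_mem hg0))
    have hx'' : p x ∉ Cone G'' := by
      rintro ⟨c, hc, hcx⟩
      apply hx
      have hxeq : x = p x + ((φ ⬝ᵥ x) / (φ ⬝ᵥ g0)) • g0 := by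
        simp [hp]
      rw [hxeq]
      apply add_mem
      · rw [hcx]
        apply sum_mem
        intro h hh
        obtain ⟨g, hg, rfl⟩ := Finset.mem_image.1 hh
        exact smul_mem (hc _) (hpg_mem g hg)
      · have hlam : 0 < (φ ⬝ᵥ x) / (φ ⬝ᵥ g0) := by
          rw [← neg_div_neg_eq]
          exact div_pos (by linarith) (by linarith)
        exact smul_mem (le_of_lt hlam) (gen_mem hg0)
    obtain ⟨φ'', hφ'', hφ''x⟩ := ih G'' hcard'' (p x) hx''
    set φh : Fin d → ℝ := φ'' - ((φ'' ⬝ᵥ g0) / (φ ⬝ᵥ g0)) • φ with hφh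
    have hkey : ∀ y, φh ⬝ᵥ y = φ'' ⬝ᵥ (p y) := by
      intro y
      rw [hdotp]
      simp [hφh, sub_dotProduct, smul_dotProduct, smul_eq_mul]
      ring
    refine ⟨φh, fun g hg => ?_, ?_⟩
    · rcases eq_or_ne g g0 with heq | hne
      · rw [heq, hkey]
        have hpg0 : p g0 = 0 := by
          simp [hp, div_self (ne_of_lt hφg0)]
        rw [hpg0]
        simp
      · rw [hkey]
        exact hφ'' _ (Finset.mem_image_of_mem p (Finset.mem_erase.2 ⟨hne, hg⟩))
    · rw [hkey]; exact hφ''x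

lemma farkas {G : Finset (Fin d → ℝ)} {x : Fin d → ℝ} (hx : x ∉ Cone G) :
    ∃ φ : Fin d → ℝ, (∀ g ∈ G, 0 ≤ φ ⬝ᵥ g) ∧ φ ⬝ᵥ x < 0 :=
  farkas_aux G.card G le_rfl x hx


lemma tilt {G : Finset (Fin d → ℝ)} {φ0 ψ x : Fin d → ℝ}
    (h0 : ∀ g ∈ G, 0 ≤ φ0 ⬝ᵥ g) (hx0 : φ0 ⬝ᵥ x < 0) (hψx : ψ ⬝ᵥ x ≤ 0)
    (hψ : ∃ g ∈ G, ψ ⬝ᵥ g < 0) :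
    ∃ φ : Fin d → ℝ, (∀ g ∈ G, 0 ≤ φ ⬝ᵥ g) ∧ φ ⬝ᵥ x < 0 ∧
      ∃ g ∈ G, φ ⬝ᵥ g = 0 ∧ ψ ⬝ᵥ g < 0 := by
  classical
  set B := G.filter (fun g => ψ ⬝ᵥ g < 0) with hB
  have hBne : B.Nonempty := by
    obtain ⟨g, hg, hlt⟩ := hψ
    exact ⟨g, Finset.mem_filter.2 ⟨hg, hlt⟩⟩
  set r : (Fin d → ℝ) → ℝ := fun g => (φ0 ⬝ᵥ g) / (-(ψ ⬝ᵥ g)) with hr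
  obtain ⟨gm, hgm, hTm⟩ := Finset.exists_mem_eq_inf' hBne r
  set T := B.inf' hBne r with hT
  have hgmG : gm ∈ G := (Finset.mem_filter.1 hgm).1
  have hgmψ : ψ ⬝ᵥ gm < 0 := (Finset.mem_filter.1 hgm).2
  have hT0 : 0 ≤ T := by
    rw [hTm]
    exact div_nonneg (h0 gm hgmG) (by linarith)
  have hdot : ∀ y, (φ0 + T • ψ) ⬝ᵥ y = φ0 ⬝ᵥ y + T * (ψ ⬝ᵥ y) := fun y => by
    simp [add_dotProduct, smul_dotProduct, smul_eq_mul]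
  refine ⟨φ0 + T • ψ, ?_, ?_, gm, hgmG, ?_, hgmψ⟩
  · intro g hg
    rw [hdot]
    by_cases hψg : 0 ≤ ψ ⬝ᵥ g
    · exact add_nonneg (h0 g hg) (mul_nonneg hT0 hψg)
    · push_neg at hψg
      have hgB : g ∈ B := Finset.mem_filter.2 ⟨hg, hψg⟩
      have hTle : T ≤ (φ0 ⬝ᵥ g) / (-(ψ ⬝ᵥ g)) := Finset.inf'_le r hgB
      have hmul : T * (-(ψ ⬝ᵥ g)) ≤ φ0 ⬝ᵥ g :=
        (le_div_iff₀ (by linarith : (0:ℝ) < -(ψ ⬝ᵥ g))).1 hTle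
      rw [mul_neg] at hmul
      linarith
  · rw [hdot]
    have : T * (ψ ⬝ᵥ x) ≤ 0 := mul_nonpos_iff.2 (Or.inl ⟨hT0, hψx⟩)
    linarith
  · rw [hdot, hTm]
    have hne : -(ψ ⬝ᵥ gm) ≠ 0 := by linarith
    show φ0 ⬝ᵥ gm + φ0 ⬝ᵥ gm / -(ψ ⬝ᵥ gm) * ψ ⬝ᵥ gm = 0
    rw [div_mul_eq_mul_div, div_neg, mul_div_assoc, div_self (ne_of_lt hgmψ)]
    ring

lemma mem_filter_cone_iff {G : Finset (Fin d → ℝ)} {φ : Fin d → ℝ}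
    (hφ : ∀ g ∈ G, 0 ≤ φ ⬝ᵥ g) {y : Fin d → ℝ} :
    y ∈ Cone (G.filter (fun g => φ ⬝ᵥ g = 0)) ↔ y ∈ Cone G ∧ φ ⬝ᵥ y = 0 := by
  classical
  constructor
  · intro hy
    refine ⟨cone_mono (Finset.filter_subset _ _) hy, ?_⟩
    obtain ⟨c, hc, rfl⟩ := hy
    rw [dot_sum]
    exact Finset.sum_eq_zero fun g hg => by
      rw [(Finset.mem_filter.1 hg).2, mul_zero]
  · rintro ⟨⟨c, hc, rfl⟩, hdotz⟩
    rw [dot_sum] at hdotz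
    have hterm : ∀ g ∈ G, c g * (φ ⬝ᵥ g) = 0 :=
      (Finset.sum_eq_zero_iff_of_nonneg fun g hg =>
        mul_nonneg (hc g) (hφ g hg)).1 hdotz
    refine ⟨c, hc, ?_⟩
    rw [Finset.sum_filter]
    apply Finset.sum_congr rfl
    intro g hg
    by_cases h : φ ⬝ᵥ g = 0
    · simp [h]
    · have hcg : c g = 0 := by
        rcases mul_eq_zero.1 (hterm g hg) with h' | h'
        · exact h'
        · exact absurd h' h
      simp [h, hcg]

lemma dual_zero_of_mem {G : Finset (Fin d → ℝ)} {φ : Fin d → ℝ}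
    (h : ∀ g ∈ G, φ ⬝ᵥ g = 0) {y : Fin d → ℝ} (hy : y ∈ Cone G) : φ ⬝ᵥ y = 0 := by
  obtain ⟨c, hc, rfl⟩ := hy
  rw [dot_sum]
  exact Finset.sum_eq_zero fun g hg => by rw [h g hg, mul_zero]


lemma face_trans {C F R : Set (Fin d → ℝ)} (h1 : IsFaceOfCone C F) (h2 : IsFaceOfCone F R) :
    IsFaceOfCone C R := by
  obtain ⟨hFC, hF⟩ := h1
  obtain ⟨hRF, hR⟩ := h2
  refine ⟨hRF.trans hFC, fun a ha b hb => ⟨fun hab => ?_, fun ⟨haR, hbR⟩ => ?_⟩⟩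
  · have habF : a + b ∈ F := hRF hab
    obtain ⟨haF, hbF⟩ := (hF a ha b hb).1 habF
    exact (hR a haF b hbF).1 hab
  · exact (hR a (hRF haR) b (hRF hbR)).2 ⟨haR, hbR⟩

lemma face_filter {G : Finset (Fin d → ℝ)} {φ : Fin d → ℝ}
    (hφ : ∀ g ∈ G, 0 ≤ φ ⬝ᵥ g) :
    IsFaceOfCone (Cone G) (Cone (G.filter (fun g => φ ⬝ᵥ g = 0))) := by
  classical
  refine ⟨cone_mono (Finset.filter_subset _ _), fun a ha b hb => ?_⟩
  have h1 : 0 ≤ φ ⬝ᵥ a := dual_nonneg hφ ha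
  have h2 : 0 ≤ φ ⬝ᵥ b := dual_nonneg hφ hb
  have h3 : φ ⬝ᵥ (a + b) = φ ⬝ᵥ a + φ ⬝ᵥ b := dotProduct_add _ _ _
  rw [mem_filter_cone_iff hφ, mem_filter_cone_iff hφ, mem_filter_cone_iff hφ]
  constructor
  · rintro ⟨_, h0⟩
    rw [h3] at h0
    exact ⟨⟨ha, by linarith⟩, ⟨hb, by linarith⟩⟩
  · rintro ⟨⟨_, ha0⟩, ⟨_, hb0⟩⟩
    exact ⟨add_mem ha hb, by rw [h3, ha0, hb0, add_zero]⟩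

lemma exists_orth_vector {V : Submodule ℝ (Fin d → ℝ)} (hV : 2 ≤ Module.finrank ℝ V)
    (x : Fin d → ℝ) : ∃ w : Fin d → ℝ, w ∈ V ∧ w ≠ 0 ∧ w ⬝ᵥ x = 0 := by
  let f : V →ₗ[ℝ] ℝ :=
    { toFun := fun v => (v : Fin d → ℝ) ⬝ᵥ x
      map_add' := fun a b => by simp [add_dotProduct]
      map_smul' := fun t a => by simp [smul_dotProduct] }
  have h1 : Module.finrank ℝ (LinearMap.range f) ≤ 1 := by
    have := Submodule.finrank_le (LinearMap.range f)
    simpa using this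
  have h2 := LinearMap.finrank_range_add_finrank_ker f
  have hker : 0 < Module.finrank ℝ (LinearMap.ker f) := by omega
  have hne : LinearMap.ker f ≠ ⊥ := by
    intro h
    rw [h, finrank_bot] at hker
    exact lt_irrefl 0 hker
  obtain ⟨w, hwker, hwne⟩ := (Submodule.ne_bot_iff _).1 hne
  refine ⟨(w : Fin d → ℝ), w.2, ?_, hwker⟩
  intro h
  exact hwne (Subtype.ext h)

lemma not_forall_orth {G : Finset (Fin d → ℝ)} {w : Fin d → ℝ} (hw : w ≠ 0)
    (hwspan : w ∈ Submodule.span ℝ (↑G : Set (Fin d → ℝ))) :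
    ¬ ∀ g ∈ G, w ⬝ᵥ g = 0 := by
  intro h
  have hall : ∀ y ∈ Submodule.span ℝ (↑G : Set (Fin d → ℝ)), w ⬝ᵥ y = 0 := by
    intro y hy
    induction hy using Submodule.span_induction with
    | mem z hz => exact h z hz
    | zero => simp
    | add a b _ _ ha hb => rw [dotProduct_add, ha, hb, add_zero]
    | smul t a _ ha => rw [dotProduct_smul, ha, smul_zero]
  exact hw (dotProduct_self_eq_zero.1 (hall w hwspan))


lemma exists_ray_face (n : ℕ) : ∀ G : Finset (Fin d → ℝ), G.card ≤ n →
    (∀ y ∈ Cone G, -y ∈ Cone G → y = 0) → (∃ g ∈ G, g ≠ 0) →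
    ∃ v : Fin d → ℝ, v ≠ 0 ∧ IsFaceOfCone (Cone G) {y | ∃ t : ℝ, 0 ≤ t ∧ y = t • v} := by
  classical
  induction n with
  | zero =>
    rintro G hG _ ⟨g, hg, _⟩
    have : G = ∅ := Finset.card_eq_zero.1 (Nat.le_zero.1 hG)
    subst this
    exact absurd hg (Finset.notMem_empty _)
  | succ n ih =>
    intro G hG hpointed hex
    obtain ⟨g1, hg1G, hg1ne⟩ := hex
    by_cases hdim : Module.finrank ℝ (Submodule.span ℝ (↑G : Set (Fin d → ℝ))) ≤ 1
    · -- base case: everything lies on the ray of `g1`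
      have hspan_eq : Submodule.span ℝ {g1} = Submodule.span ℝ (↑G : Set (Fin d → ℝ)) := by
        apply Submodule.eq_of_le_of_finrank_le
        · exact Submodule.span_mono (by simpa using hg1G)
        · rw [finrank_span_singleton hg1ne]
          exact hdim
      have hrep : ∀ g, ∃ t : ℝ, 0 ≤ t ∧ (g ∈ G → g = t • g1) := by
        intro g
        by_cases hg : g ∈ G
        · have hmem : g ∈ Submodule.span ℝ ({g1} : Set (Fin d → ℝ)) := by
            rw [hspan_eq]
            exact Submodule.subset_span (by simpa using hg)
          obtain ⟨t, ht⟩ := Submodule.mem_span_singleton.1 hmem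
          rcases le_or_gt 0 t with h0 | h0
          · exact ⟨t, h0, fun _ => ht.symm⟩
          · exfalso
            have hgC : g ∈ Cone G := gen_mem hg
            have hngC : -g ∈ Cone G := by
              rw [← ht, ← neg_smul]
              exact smul_mem (by linarith) (gen_mem hg1G)
            have hg0 : g = 0 := hpointed g hgC hngC
            rw [← ht] at hg0
            rcases smul_eq_zero.1 hg0 with h | h
            · linarith
            · exact hg1ne h
        · exact ⟨0, le_rfl, fun h => absurd h hg⟩
      choose t ht0 htr using hrep
      have hconeeq : Cone G = {y : Fin d → ℝ | ∃ s : ℝ, 0 ≤ s ∧ y = s • g1} := by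
        ext y
        constructor
        · rintro ⟨c, hc, rfl⟩
          refine ⟨∑ g ∈ G, c g * t g,
            Finset.sum_nonneg fun g _ => mul_nonneg (hc g) (ht0 g), ?_⟩
          rw [Finset.sum_smul]
          refine Finset.sum_congr rfl fun g hg => ?_
          rw [← smul_smul, ← htr g hg]
        · rintro ⟨s, hs, rfl⟩
          exact smul_mem hs (gen_mem hg1G)
      refine ⟨g1, hg1ne, ?_⟩
      rw [hconeeq]
      refine ⟨subset_rfl, fun a ha b hb => ⟨fun _ => ⟨ha, hb⟩, fun _ => ?_⟩⟩
      obtain ⟨s, hs, rfl⟩ := ha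
      obtain ⟨u, hu, rfl⟩ := hb
      exact ⟨s + u, by linarith, by rw [add_smul]⟩
    · push_neg at hdim
      have hng1 : -g1 ∉ Cone G := fun h => hg1ne (hpointed g1 (gen_mem hg1G) h)
      obtain ⟨φ0, hφ0, hφ0x⟩ := farkas hng1
      obtain ⟨w, hwV, hwne, hwx⟩ := exists_orth_vector hdim g1
      have hnotorth : ¬ ∀ g ∈ G, w ⬝ᵥ g = 0 := not_forall_orth hwne hwV
      have hψex : ∃ ψ : Fin d → ℝ, ψ ⬝ᵥ g1 = 0 ∧ ∃ g ∈ G, ψ ⬝ᵥ g < 0 := by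
        push_neg at hnotorth
        obtain ⟨g, hgG, hgne⟩ := hnotorth
        rcases lt_or_gt_of_ne hgne with h | h
        · exact ⟨w, hwx, g, hgG, h⟩
        · exact ⟨-w, by rw [neg_dotProduct, hwx, neg_zero], g, hgG,
            by rw [neg_dotProduct]; linarith⟩
      obtain ⟨ψ, hψg1, hψneg⟩ := hψex
      have hψx : ψ ⬝ᵥ (-g1) ≤ 0 := by rw [dotProduct_neg, hψg1, neg_zero]
      obtain ⟨φ, hφ, hφx, g2, hg2G, hφg2, hψg2⟩ := tilt hφ0 hφ0x hψx hψneg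
      set Z := G.filter (fun g => φ ⬝ᵥ g = 0) with hZ
      have hg2Z : g2 ∈ Z := Finset.mem_filter.2 ⟨hg2G, hφg2⟩
      have hg2ne : g2 ≠ 0 := by
        intro h
        rw [h] at hψg2
        simp at hψg2
      have hg1φ : 0 < φ ⬝ᵥ g1 := by
        rw [dotProduct_neg] at hφx
        linarith
      have hg1nZ : g1 ∉ Z := by
        intro h
        have := (Finset.mem_filter.1 h).2
        linarith
      have hZcard : Z.card ≤ n := by
        have hss : Z ⊂ G := ⟨Finset.filter_subset _ _, fun h => hg1nZ (h hg1G)⟩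
        have := Finset.card_lt_card hss
        omega
      have hZpointed : ∀ y ∈ Cone Z, -y ∈ Cone Z → y = 0 := fun y hy hny =>
        hpointed y (cone_mono (Finset.filter_subset _ _) hy)
          (cone_mono (Finset.filter_subset _ _) hny)
      obtain ⟨v, hvne, hface⟩ := ih Z hZcard hZpointed ⟨g2, hg2Z, hg2ne⟩
      exact ⟨v, hvne, face_trans (face_filter hφ) hface⟩

end ConeAux

open ConeAux

/-- Let `d ≥ 2` and let `C ⊆ ℝ^d` be a pointed finitely generated convex cone of full
dimension `d`. If `x ∉ C`, then there is an extremal ray of `C` (a one-dimensional face,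
spanned by some `v ≠ 0`) whose translate by `x` misses `C`. -/
theorem exists_extremal_ray_translate_disjoint (d : ℕ) (hd : 2 ≤ d)
    (G : Finset (Fin d → ℝ)) (C : Set (Fin d → ℝ))
    (hC : C = {x | ∃ c : (Fin d → ℝ) → ℝ, (∀ g, 0 ≤ c g) ∧ x = ∑ g ∈ G, c g • g})
    (hpointed : ∀ x ∈ C, -x ∈ C → x = 0)
    (hfull : Submodule.span ℝ C = ⊤)
    (x : Fin d → ℝ) (hx : x ∉ C) :
    ∃ v : Fin d → ℝ, v ≠ 0 ∧
      IsFaceOfCone C {y | ∃ t : ℝ, 0 ≤ t ∧ y = t • v} ∧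
      ∀ t : ℝ, 0 ≤ t → x + t • v ∉ C := by
  classical
  have hCG : C = Cone G := hC
  subst hCG
  -- the generators span the whole space
  have hCsub : Cone G ⊆ (Submodule.span ℝ (↑G : Set (Fin d → ℝ)) : Set (Fin d → ℝ)) := by
    rintro y ⟨c, hc, rfl⟩
    exact Submodule.sum_mem _ fun g hg => Submodule.smul_mem _ _ (Submodule.subset_span hg)
  have hspanG : Submodule.span ℝ (↑G : Set (Fin d → ℝ)) = ⊤ := by
    rw [eq_top_iff, ← hfull]
    exact Submodule.span_le.2 hCsub
  have hdimG : 2 ≤ Module.finrank ℝ (Submodule.span ℝ (↑G : Set (Fin d → ℝ))) := by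
    rw [hspanG, finrank_top]
    simpa using hd
  -- separating functional
  obtain ⟨φ0, hφ0, hφ0x⟩ := farkas hx
  -- tilting direction
  obtain ⟨w, hwV, hwne, hwx⟩ := exists_orth_vector hdimG x
  have hnotorth : ¬ ∀ g ∈ G, w ⬝ᵥ g = 0 := not_forall_orth hwne hwV
  have hψex : ∃ ψ : Fin d → ℝ, ψ ⬝ᵥ x = 0 ∧ ∃ g ∈ G, ψ ⬝ᵥ g < 0 := by
    push_neg at hnotorth
    obtain ⟨g, hgG, hgne⟩ := hnotorth
    rcases lt_or_gt_of_ne hgne with h | h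
    · exact ⟨w, hwx, g, hgG, h⟩
    · exact ⟨-w, by rw [neg_dotProduct, hwx, neg_zero], g, hgG,
        by rw [neg_dotProduct]; linarith⟩
  obtain ⟨ψ, hψxz, hψneg⟩ := hψex
  obtain ⟨φ, hφ, hφx, g2, hg2G, hφg2, hψg2⟩ := tilt hφ0 hφ0x (le_of_eq hψxz) hψneg
  set Z := G.filter (fun g => φ ⬝ᵥ g = 0) with hZ
  have hg2Z : g2 ∈ Z := Finset.mem_filter.2 ⟨hg2G, hφg2⟩
  have hg2ne : g2 ≠ 0 := by
    intro h
    rw [h] at hψg2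
    simp at hψg2
  have hZpointed : ∀ y ∈ Cone Z, -y ∈ Cone Z → y = 0 := fun y hy hny =>
    hpointed y (cone_mono (Finset.filter_subset _ _) hy)
      (cone_mono (Finset.filter_subset _ _) hny)
  obtain ⟨v, hvne, hface⟩ := exists_ray_face Z.card Z le_rfl hZpointed ⟨g2, hg2Z, hg2ne⟩
  refine ⟨v, hvne, face_trans (face_filter hφ) hface, ?_⟩
  have hvZ : v ∈ Cone Z := hface.1 ⟨1, zero_le_one, (one_smul _ _).symm⟩
  have hφv : φ ⬝ᵥ v = 0 :=
    dual_zero_of_mem (fun g hg => (Finset.mem_filter.1 hg).2) hvZ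
  intro t ht hmem
  have hnn : 0 ≤ φ ⬝ᵥ (x + t • v) := dual_nonneg hφ hmem
  rw [dotProduct_add, dotProduct_smul, hφv, smul_zero, add_zero] at hnn
  linarith
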